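/- Let p ∈ (1/2, 1) be a fixed constant. Suppose there exists a constant c > 0 such that for infinitely many n, with probability at least c the binomial random graph G(n,p) has the property that every orientation of it contains a Seymour vertex. Then every oriented graph contains a Seymour vertex. -/

import Mathlib

open Filter

/-- The outneighbourhood `N1(v)` of `v` in the digraph with arc relation `D`. -/
def outNbr {V : Type*} (D : V → V → Prop) (v : V) : Set V := {w | w ≠ v ∧ D v w}

/-- The inneighbourhood `N⁻(v)` of `v`. -/
def inNbr {V : Type*} (D : V → V → Prop) (v : V) : Set V := {w | w ≠ v ∧ D w v}

/-- The second outneighbourhood `N2(v)` of `v`. -/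
def outNbr2 {V : Type*} (D : V → V → Prop) (v : V) : Set V :=
  {w | w ∉ insert v (outNbr D v) ∧ ∃ u ∈ outNbr D v, D u w}

/-- `v` is a Seymour vertex: `|N2(v)| ≥ |N1(v)|`. -/
def SeymourVertex {V : Type*} (D : V → V → Prop) (v : V) : Prop :=
  (outNbr D v).ncard ≤ (outNbr2 D v).ncard

/-- `v` is a Sullivan vertex: `|N2(v)| ≥ |N⁻(v)|`. -/
def SullivanVertex {V : Type*} (D : V → V → Prop) (v : V) : Prop :=
  (inNbr D v).ncard ≤ (outNbr2 D v).ncard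

/-- An oriented graph: an asymmetric (hence irreflexive and loopless) arc relation. -/
def OrientedGraph {V : Type*} (D : V → V → Prop) : Prop := ∀ u v, D u v → ¬ D v u

/-- `D` is an orientation of the simple graph `G`. -/
def Orients {V : Type*} (D : V → V → Prop) (G : SimpleGraph V) : Prop :=
  OrientedGraph D ∧ ∀ u v, G.Adj u v ↔ (D u v ∨ D v u)

/-- Strong connectivity of a digraph: every vertex reaches every other by a directed path. -/
def StrongConn {V : Type*} (D : V → V → Prop) : Prop := ∀ u v, Relation.ReflTransGen D u v

/-- The number of edges of `G` with one endpoint in `A` and the other in `B`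
(counted via ordered pairs; equals `e(A,B)` for disjoint `A`, `B`). -/
noncomputable def eBtw {V : Type*} (G : SimpleGraph V) (A B : Set V) : ℕ :=
  {p : V × V | p.1 ∈ A ∧ p.2 ∈ B ∧ G.Adj p.1 p.2}.ncard

/-- The number of edges of `G` with both endpoints in `A`. -/
noncomputable def eIn {V : Type*} (G : SimpleGraph V) (A : Set V) : ℕ :=
  {e | e ∈ G.edgeSet ∧ ∀ v ∈ e, v ∈ A}.ncard

open scoped Classical in
/-- The probability that the binomial random graph `G(n,p)` satisfies the property `P`. -/
noncomputable def gnpProb (n : ℕ) (p : ℝ) (P : SimpleGraph (Fin n) → Prop) : ℝ :=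
  ∑ G : SimpleGraph (Fin n),
    if P G then p ^ G.edgeSet.ncard * (1 - p) ^ (n.choose 2 - G.edgeSet.ncard) else 0

open Finset

section ProbCore
variable {ι : Type*} [DecidableEq ι]

/-- product weight of a configuration `S` over slot set `U`. -/
noncomputable def prodw (p : ℝ) (U S : Finset ι) : ℝ :=
  ∏ e ∈ U, if e ∈ S then p else 1 - p

lemma prodw_nonneg {p : ℝ} (h0 : 0 ≤ p) (h1 : p ≤ 1) (U S : Finset ι) :
    0 ≤ prodw p U S :=
  Finset.prod_nonneg fun e _ => by by_cases h : e ∈ S <;> simp [h, h0, h1, sub_nonneg]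

lemma sum_powerset_prod_ite (U : Finset ι) (f g : ι → ℝ) :
    ∑ S ∈ U.powerset, ∏ e ∈ U, (if e ∈ S then f e else g e) = ∏ e ∈ U, (f e + g e) := by
  rw [Finset.prod_add]
  refine Finset.sum_congr rfl fun S hS => ?_
  rw [Finset.mem_powerset] at hS
  rw [← Finset.prod_filter_mul_prod_filter_not U (· ∈ S)]
  have h1 : U.filter (· ∈ S) = S := by
    rw [Finset.filter_mem_eq_inter, Finset.inter_eq_right.mpr hS]
  have h2 : U.filter (fun e => e ∉ S) = U \ S := by
    ext e; simp [Finset.mem_sdiff]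
  rw [h1, h2]
  congr 1
  · exact Finset.prod_congr rfl fun e he => if_pos he
  · exact Finset.prod_congr rfl fun e he => if_neg (Finset.mem_sdiff.mp he).2

lemma prodw_eq_pow {p : ℝ} {U S : Finset ι} (hS : S ⊆ U) :
    prodw p U S = p ^ S.card * (1 - p) ^ (U.card - S.card) := by
  unfold prodw
  rw [← Finset.prod_filter_mul_prod_filter_not U (· ∈ S)]
  have h1 : U.filter (· ∈ S) = S := by
    rw [Finset.filter_mem_eq_inter, Finset.inter_eq_right.mpr hS]
  have h2 : U.filter (fun e => e ∉ S) = U \ S := by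
    ext e; simp [Finset.mem_sdiff]
  rw [h1, h2, ← Finset.card_sdiff_of_subset hS]
  congr 1
  · rw [Finset.prod_congr rfl fun e he => if_pos he, Finset.prod_const]
  · rw [Finset.prod_congr rfl (fun e he => if_neg (Finset.mem_sdiff.mp he).2), Finset.prod_const]

open scoped Classical in
/-- probability of an event on configurations. -/
noncomputable def PrW (p : ℝ) (U : Finset ι) (A : Finset ι → Prop) : ℝ :=
  ∑ S ∈ U.powerset.filter A, prodw p U S

lemma PrW_nonneg {p : ℝ} (h0 : 0 ≤ p) (h1 : p ≤ 1) (U : Finset ι) (A : Finset ι → Prop) :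
    0 ≤ PrW p U A := by
  classical
  exact Finset.sum_nonneg fun S _ => prodw_nonneg h0 h1 U S

lemma PrW_mono {p : ℝ} (h0 : 0 ≤ p) (h1 : p ≤ 1) (U : Finset ι) {A B : Finset ι → Prop}
    (h : ∀ S, S ⊆ U → A S → B S) : PrW p U A ≤ PrW p U B := by
  classical
  unfold PrW
  refine Finset.sum_le_sum_of_subset_of_nonneg ?_ fun S _ _ => prodw_nonneg h0 h1 U S
  intro S hS
  simp only [Finset.mem_filter, Finset.mem_powerset] at hS ⊢
  exact ⟨hS.1, h S hS.1 hS.2⟩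

lemma PrW_total {p : ℝ} (U : Finset ι) : PrW p U (fun _ => True) = 1 := by
  classical
  unfold PrW
  trans (∑ S ∈ U.powerset, prodw p U S)
  · exact Finset.sum_congr (by ext S; simp) fun _ _ => rfl
  unfold prodw
  rw [sum_powerset_prod_ite U (fun _ => p) (fun _ => 1 - p)]
  simp

lemma PrW_le_one {p : ℝ} (h0 : 0 ≤ p) (h1 : p ≤ 1) (U : Finset ι) (A : Finset ι → Prop) :
    PrW p U A ≤ 1 := by
  rw [← PrW_total (p := p) U]
  exact PrW_mono h0 h1 U fun S _ _ => trivial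

lemma PrW_or {p : ℝ} (h0 : 0 ≤ p) (h1 : p ≤ 1) (U : Finset ι) (A B : Finset ι → Prop) :
    PrW p U (fun S => A S ∨ B S) ≤ PrW p U A + PrW p U B := by
  classical
  unfold PrW
  refine le_trans (b := ∑ S ∈ U.powerset.filter A ∪ U.powerset.filter B, prodw p U S) ?_ ?_
  · refine Finset.sum_le_sum_of_subset_of_nonneg ?_ fun S _ _ => prodw_nonneg h0 h1 U S
    intro S hS
    simp only [Finset.mem_filter, Finset.mem_union] at hS ⊢
    tauto
  · rw [← Finset.union_sdiff_self_eq_union, Finset.sum_union Finset.disjoint_sdiff]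
    have h2 : ∑ S ∈ U.powerset.filter B \ U.powerset.filter A, prodw p U S ≤
        ∑ S ∈ U.powerset.filter B, prodw p U S :=
      Finset.sum_le_sum_of_subset_of_nonneg (Finset.sdiff_subset)
        fun S _ _ => prodw_nonneg h0 h1 U S
    have h3 : 0 ≤ ∑ S ∈ U.powerset.filter A, prodw p U S :=
      Finset.sum_nonneg fun S _ => prodw_nonneg h0 h1 U S
    gcongr

lemma PrW_exists {p : ℝ} (h0 : 0 ≤ p) (h1 : p ≤ 1) (U : Finset ι) {κ : Type*}
    (T : Finset κ) (A : κ → Finset ι → Prop) :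
    PrW p U (fun S => ∃ x ∈ T, A x S) ≤ ∑ x ∈ T, PrW p U (A x) := by
  classical
  induction T using Finset.induction with
  | empty => simp [PrW]
  | insert a T' hx ih =>
    calc PrW p U (fun S => ∃ x ∈ insert a T', A x S)
        ≤ PrW p U (fun S => A a S ∨ ∃ x ∈ T', A x S) := by
          refine PrW_mono h0 h1 U fun S _ h => ?_
          obtain ⟨x, hxm, hxa⟩ := h
          rcases Finset.mem_insert.mp hxm with rfl | hm
          · exact Or.inl hxa
          · exact Or.inr ⟨x, hm, hxa⟩
      _ ≤ PrW p U (A a) + PrW p U (fun S => ∃ x ∈ T', A x S) := PrW_or h0 h1 U _ _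
      _ ≤ PrW p U (A a) + ∑ x ∈ T', PrW p U (A x) := by linarith [ih]
      _ = ∑ x ∈ insert a T', PrW p U (A x) := by rw [Finset.sum_insert hx]



lemma PrW_congr {p : ℝ} (U : Finset ι) {A B : Finset ι → Prop}
    (h : ∀ S, S ⊆ U → (A S ↔ B S)) : PrW p U A = PrW p U B := by
  classical
  unfold PrW
  apply Finset.sum_congr _ (fun _ _ => rfl)
  ext S
  simp only [Finset.mem_filter, Finset.mem_powerset]
  exact and_congr_right fun hS => h S hS

lemma prodw_le_one {p : ℝ} (h0 : 0 ≤ p) (h1 : p ≤ 1) (U S : Finset ι) :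
    prodw p U S ≤ 1 := by
  apply Finset.prod_le_one (fun e _ => by by_cases h : e ∈ S <;> simp [h, h0, h1, sub_nonneg])
  intro e _
  by_cases h : e ∈ S <;> simp [h, h1] <;> linarith

/-- Chernoff-type bound: probability that at most half of the slots of `A` are present. -/
lemma chernoff {p : ℝ} (hp : 1/2 < p) (hp1 : p < 1) (U A : Finset ι) (hA : A ⊆ U) :
    PrW p U (fun S => 2 * (S ∩ A).card ≤ A.card) ≤ (2 * Real.sqrt (p * (1 - p))) ^ A.card := by
  classical
  have hp0 : 0 < p := by linarith
  have h1p : 0 < 1 - p := by linarith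
  set l : ℝ := Real.sqrt (p / (1 - p)) with hl
  have hl0 : 0 < l := Real.sqrt_pos.mpr (by positivity)
  have hlsq : l ^ 2 = p / (1 - p) := Real.sq_sqrt (by positivity)
  have hdiv1 : 1 ≤ p / (1 - p) := by rw [le_div_iff₀ h1p]; linarith
  have hl1 : 1 ≤ l := by nlinarith [hl0]
  have hterm : ∀ S, S ⊆ U → 2 * (S ∩ A).card ≤ A.card →
      prodw p U S ≤ prodw p U S * (l ^ 2) ^ (A \ S).card / l ^ A.card := by
    intro S hSU hcard
    have hsplit : (S ∩ A).card + (A \ S).card = A.card := by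
      rw [Finset.inter_comm]
      exact Finset.card_inter_add_card_sdiff A S
    have hge : A.card ≤ 2 * (A \ S).card := by omega
    have hwn : 0 ≤ prodw p U S := prodw_nonneg hp0.le hp1.le U S
    rw [le_div_iff₀ (by positivity)]
    have hpow : l ^ A.card ≤ (l ^ 2) ^ (A \ S).card := by
      rw [← pow_mul]
      exact pow_le_pow_right₀ hl1 (by omega)
    have := mul_le_mul_of_nonneg_left hpow hwn
    linarith
  -- sum bound
  unfold PrW
  refine le_trans (b := (∑ S ∈ U.powerset, prodw p U S * (l ^ 2) ^ (A \ S).card) / l ^ A.card)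
    ?_ ?_
  · rw [Finset.sum_div]
    refine le_trans (Finset.sum_le_sum (fun S hS => ?_))
      (Finset.sum_le_sum_of_subset_of_nonneg ?_ (fun S hS _ => ?_))
    · simp only [Finset.mem_filter, Finset.mem_powerset] at hS
      exact hterm S hS.1 hS.2
    · intro S hS
      simp only [Finset.mem_filter, Finset.mem_powerset] at hS ⊢
      exact hS.1
    · have hSU : S ⊆ U := Finset.mem_powerset.mp hS
      have := prodw_nonneg hp0.le hp1.le U S
      positivity
  have compute : ∑ S ∈ U.powerset, prodw p U S * (l ^ 2) ^ (A \ S).card = (2 * p) ^ A.card := by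
    have hper : ∀ S ∈ U.powerset, prodw p U S * (l ^ 2) ^ (A \ S).card
        = ∏ e ∈ U, (if e ∈ S then p else (1 - p) * (if e ∈ A then l ^ 2 else 1)) := by
      intro S hS
      rw [Finset.mem_powerset] at hS
      have hsd : A \ S = (U \ S) ∩ A := by
        ext e
        simp only [Finset.mem_sdiff, Finset.mem_inter]
        exact ⟨fun ⟨h1, h2⟩ => ⟨⟨hA h1, h2⟩, h1⟩, fun ⟨⟨_, h2⟩, h3⟩ => ⟨h3, h2⟩⟩
      rw [← Finset.prod_filter_mul_prod_filter_not U (· ∈ S)]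
      have h1 : U.filter (· ∈ S) = S := by
        rw [Finset.filter_mem_eq_inter, Finset.inter_eq_right.mpr hS]
      have h2 : U.filter (fun e => e ∉ S) = U \ S := by
        ext e; simp [Finset.mem_sdiff]
      rw [h1, h2]
      rw [Finset.prod_congr rfl (fun e he => if_pos he)]
      rw [Finset.prod_congr rfl (fun e (he : e ∈ U \ S) => if_neg (Finset.mem_sdiff.mp he).2)]
      rw [Finset.prod_mul_distrib, Finset.prod_const]
      -- ∏_{e ∈ U\S} ite (e∈A) (l^2) 1 = (l^2) ^ ((U\S) ∩ A).card
      have h3 : ∏ e ∈ U \ S, (if e ∈ A then l ^ 2 else 1) = (l ^ 2) ^ ((U \ S) ∩ A).card := by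
        rw [← Finset.prod_filter_mul_prod_filter_not (U \ S) (· ∈ A)]
        rw [Finset.prod_congr rfl (fun e he => if_pos (Finset.mem_filter.mp he).2)]
        rw [Finset.prod_congr rfl (fun e (he : e ∈ (U \ S).filter (fun e => e ∉ A)) =>
          if_neg (Finset.mem_filter.mp he).2)]
        rw [Finset.prod_const, Finset.prod_const, one_pow, mul_one, Finset.filter_mem_eq_inter]
      rw [h3, ← hsd, prodw_eq_pow hS]
      have hcard : U.card - S.card = (U \ S).card := (Finset.card_sdiff_of_subset hS).symm
      rw [hcard, Finset.prod_const]
      ring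
    rw [Finset.sum_congr rfl hper, sum_powerset_prod_ite U (fun _ => p)
      (fun e => (1 - p) * (if e ∈ A then l ^ 2 else 1))]
    rw [← Finset.prod_sdiff hA]
    have hA1 : ∏ e ∈ A, (p + (1 - p) * (if e ∈ A then l ^ 2 else 1)) = (2 * p) ^ A.card := by
      have hval : ∀ e ∈ A, (p + (1 - p) * (if e ∈ A then l ^ 2 else 1)) = 2 * p := by
        intro e he
        rw [if_pos he, hlsq, mul_comm ((1:ℝ) - p), div_mul_cancel₀ _ (ne_of_gt h1p)]
        ring
      rw [Finset.prod_congr rfl hval, Finset.prod_const]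
    have hA2 : ∏ e ∈ U \ A, (p + (1 - p) * (if e ∈ A then l ^ 2 else 1)) = 1 := by
      apply Finset.prod_eq_one
      intro e he
      rw [if_neg (Finset.mem_sdiff.mp he).2]
      ring
    rw [hA1, hA2, one_mul]
  rw [compute, ← div_pow]
  apply le_of_eq
  congr 1
  have hsp : (0:ℝ) < Real.sqrt p := Real.sqrt_pos.mpr hp0
  have hs1p : (0:ℝ) < Real.sqrt (1 - p) := Real.sqrt_pos.mpr h1p
  rw [hl, Real.sqrt_div hp0.le, Real.sqrt_mul hp0.le, div_div_eq_mul_div]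
  rw [div_eq_iff (ne_of_gt hsp)]
  nlinarith [Real.sq_sqrt hp0.le]


lemma PrW_split {p : ℝ} (U A : Finset ι) (hA : A ⊆ U) (φ ψ : Finset ι → Prop) :
    PrW p U (fun S => φ (S ∩ A) ∧ ψ (S \ A)) = PrW p A φ * PrW p (U \ A) ψ := by
  classical
  unfold PrW
  rw [Finset.sum_mul_sum]
  rw [← Finset.sum_product']
  refine Finset.sum_nbij' (fun S => (S ∩ A, S \ A)) (fun q => q.1 ∪ q.2) ?_ ?_ ?_ ?_ ?_
  · intro S hS
    simp only [Finset.mem_filter, Finset.mem_powerset, Finset.mem_product] at hS ⊢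
    exact ⟨⟨Finset.inter_subset_right, hS.2.1⟩,
      ⟨fun x hx => Finset.mem_sdiff.mpr
        ⟨hS.1 (Finset.mem_sdiff.mp hx).1, (Finset.mem_sdiff.mp hx).2⟩, hS.2.2⟩⟩
  · intro q hq
    simp only [Finset.mem_filter, Finset.mem_powerset, Finset.mem_product] at hq ⊢
    obtain ⟨⟨ha, hφ⟩, ⟨hb, hψ⟩⟩ := hq
    have h1 : (q.1 ∪ q.2) ∩ A = q.1 := by
      rw [Finset.union_inter_distrib_right]
      rw [Finset.inter_eq_left.mpr ha]
      have : q.2 ∩ A = ∅ := by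
        rw [Finset.eq_empty_iff_forall_notMem]
        intro x hx
        rw [Finset.mem_inter] at hx
        exact (Finset.mem_sdiff.mp (hb hx.1)).2 hx.2
      rw [this, Finset.union_empty]
    have h2 : (q.1 ∪ q.2) \ A = q.2 := by
      rw [Finset.union_sdiff_distrib]
      have e1 : q.1 \ A = ∅ := by
        rw [Finset.sdiff_eq_empty_iff_subset]; exact ha
      have e2 : q.2 \ A = q.2 := by
        rw [Finset.sdiff_eq_self_iff_disjoint]
        exact Finset.disjoint_left.mpr fun x hx hxA => (Finset.mem_sdiff.mp (hb hx)).2 hxA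
      rw [e1, e2, Finset.empty_union]
    refine ⟨Finset.union_subset (ha.trans hA) (hb.trans Finset.sdiff_subset), ?_, ?_⟩
    · rw [h1]; exact hφ
    · rw [h2]; exact hψ
  · intro S hS
    simp only [Finset.mem_filter, Finset.mem_powerset] at hS
    exact (Finset.union_comm _ _).trans (Finset.sdiff_union_inter S A)
  · intro q hq
    simp only [Finset.mem_filter, Finset.mem_powerset, Finset.mem_product] at hq
    obtain ⟨⟨ha, _⟩, ⟨hb, _⟩⟩ := hq
    have h1 : (q.1 ∪ q.2) ∩ A = q.1 := by
      rw [Finset.union_inter_distrib_right, Finset.inter_eq_left.mpr ha]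
      have : q.2 ∩ A = ∅ := by
        rw [Finset.eq_empty_iff_forall_notMem]
        intro x hx
        rw [Finset.mem_inter] at hx
        exact (Finset.mem_sdiff.mp (hb hx.1)).2 hx.2
      rw [this, Finset.union_empty]
    have h2 : (q.1 ∪ q.2) \ A = q.2 := by
      rw [Finset.union_sdiff_distrib]
      have e1 : q.1 \ A = ∅ := by
        rw [Finset.sdiff_eq_empty_iff_subset]; exact ha
      have e2 : q.2 \ A = q.2 := by
        rw [Finset.sdiff_eq_self_iff_disjoint]
        exact Finset.disjoint_left.mpr fun x hx hxA => (Finset.mem_sdiff.mp (hb hx)).2 hxA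
      rw [e1, e2, Finset.empty_union]
    rw [Prod.ext_iff]
    exact ⟨h1, h2⟩
  · intro S hS
    simp only [Finset.mem_filter, Finset.mem_powerset] at hS
    -- prodw p U S = prodw p A (S ∩ A) * prodw p (U \ A) (S \ A)
    unfold prodw
    rw [← Finset.prod_sdiff hA, mul_comm]
    congr 1
    · refine Finset.prod_congr rfl fun e he => ?_
      by_cases hmem : e ∈ S
      · rw [if_pos hmem, if_pos (Finset.mem_inter.mpr ⟨hmem, he⟩)]
      · rw [if_neg hmem, if_neg (fun hc => hmem (Finset.mem_inter.mp hc).1)]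
    · refine Finset.prod_congr rfl fun e he => ?_
      rw [Finset.mem_sdiff] at he
      by_cases hmem : e ∈ S
      · rw [if_pos hmem, if_pos (Finset.mem_sdiff.mpr ⟨hmem, he.2⟩)]
      · rw [if_neg hmem, if_neg (fun hc => hmem (Finset.mem_sdiff.mp hc).1)]

/-- probability that every "block" avoids its designated pattern. -/
lemma blocks_bound {p : ℝ} (h0 : 0 ≤ p) (h1 : p ≤ 1) {q : ℝ} (hq0 : 0 ≤ q) :
    ∀ (lst : List (Finset ι × Finset ι)) (U : Finset ι),
    (∀ pr ∈ lst, pr.1 ⊆ U ∧ pr.2 ⊆ pr.1 ∧ q ≤ prodw p pr.1 pr.2) →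
    List.Pairwise (fun pr pr' => Disjoint pr.1 pr'.1) lst →
    PrW p U (fun S => ∀ pr ∈ lst, S ∩ pr.1 ≠ pr.2) ≤ (1 - q) ^ lst.length := by
  intro lst
  induction lst with
  | nil =>
    intro U _ _
    simpa using PrW_le_one h0 h1 U _
  | cons hd tl ih =>
    intro U hcond hdisj
    have hhd := hcond hd List.mem_cons_self
    obtain ⟨hAU, hpatA, hqle⟩ := hhd
    have heq : PrW p U (fun S => ∀ pr ∈ hd :: tl, S ∩ pr.1 ≠ pr.2)
        = PrW p U (fun S => (fun a => a ≠ hd.2) (S ∩ hd.1) ∧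
            (fun S' => ∀ pr ∈ tl, S' ∩ pr.1 ≠ pr.2) (S \ hd.1)) := by
      apply PrW_congr
      intro S hSU
      simp only [List.mem_cons, forall_eq_or_imp]
      constructor
      · rintro ⟨hne, hrest⟩
        refine ⟨hne, fun pr hpr => ?_⟩
        have hd2 : Disjoint pr.1 hd.1 :=
          (List.pairwise_cons.mp hdisj).1 pr hpr |>.symm
        have : (S \ hd.1) ∩ pr.1 = S ∩ pr.1 := by
          ext x
          simp only [Finset.mem_inter, Finset.mem_sdiff]
          constructor
          · rintro ⟨⟨hxS, _⟩, hxpr⟩; exact ⟨hxS, hxpr⟩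
          · rintro ⟨hxS, hxpr⟩
            exact ⟨⟨hxS, fun hxhd => Finset.disjoint_left.mp hd2 hxpr hxhd⟩, hxpr⟩
        rw [this]
        exact hrest pr hpr
      · rintro ⟨hne, hrest⟩
        refine ⟨hne, fun pr hpr => ?_⟩
        have hd2 : Disjoint pr.1 hd.1 :=
          (List.pairwise_cons.mp hdisj).1 pr hpr |>.symm
        have : (S \ hd.1) ∩ pr.1 = S ∩ pr.1 := by
          ext x
          simp only [Finset.mem_inter, Finset.mem_sdiff]
          constructor
          · rintro ⟨⟨hxS, _⟩, hxpr⟩; exact ⟨hxS, hxpr⟩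
          · rintro ⟨hxS, hxpr⟩
            exact ⟨⟨hxS, fun hxhd => Finset.disjoint_left.mp hd2 hxpr hxhd⟩, hxpr⟩
        rw [← this]
        exact hrest pr hpr
    rw [heq, PrW_split (p := p) U hd.1 hAU (fun a => a ≠ hd.2)
      (fun S' => ∀ pr ∈ tl, S' ∩ pr.1 ≠ pr.2)]
    have hfac1 : PrW p hd.1 (fun a => a ≠ hd.2) ≤ 1 - q := by
      classical
      unfold PrW
      have hmem : hd.2 ∈ hd.1.powerset := Finset.mem_powerset.mpr hpatA
      have htot : ∑ S ∈ hd.1.powerset, prodw p hd.1 S = 1 := by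
        have h := PrW_total (ι := ι) (p := p) hd.1
        unfold PrW at h
        rw [← h]
        apply Finset.sum_congr _ (fun _ _ => rfl)
        ext S; simp
      trans (∑ S ∈ hd.1.powerset.erase hd.2, prodw p hd.1 S)
      · apply le_of_eq
        apply Finset.sum_congr _ (fun _ _ => rfl)
        ext S
        simp only [Finset.mem_filter, Finset.mem_erase, Finset.mem_powerset]
        tauto
      · have hrec := Finset.sum_erase_add hd.1.powerset (prodw p hd.1) hmem
        rw [htot] at hrec
        linarith
    have hfac2 : PrW p (U \ hd.1) (fun S' => ∀ pr ∈ tl, S' ∩ pr.1 ≠ pr.2) ≤ (1 - q) ^ tl.length := by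
      apply ih
      · intro pr hpr
        obtain ⟨h1', h2', h3'⟩ := hcond pr (List.mem_cons_of_mem hd hpr)
        refine ⟨fun x hx => Finset.mem_sdiff.mpr ⟨h1' hx, ?_⟩, h2', h3'⟩
        intro hxhd
        exact Finset.disjoint_left.mp ((List.pairwise_cons.mp hdisj).1 pr hpr).symm hx hxhd
      · exact (List.pairwise_cons.mp hdisj).2
    have hq1 : q ≤ 1 := hqle.trans (prodw_le_one h0 h1 _ _)
    calc PrW p hd.1 (fun a => a ≠ hd.2) * PrW p (U \ hd.1) (fun S' => ∀ pr ∈ tl, S' ∩ pr.1 ≠ pr.2)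
        ≤ (1 - q) * (1 - q) ^ tl.length := by
          apply mul_le_mul hfac1 hfac2 (PrW_nonneg h0 h1 _ _) (by linarith)
      _ = (1 - q) ^ (hd :: tl).length := by
          rw [List.length_cons, pow_succ]
          ring
end ProbCore

noncomputable def slots (n : ℕ) : Finset (Sym2 (Fin n)) := (⊤ : SimpleGraph (Fin n)).edgeFinset

lemma mem_slots {n : ℕ} {e : Sym2 (Fin n)} : e ∈ slots n ↔ ¬ e.IsDiag := by
  simp [slots, SimpleGraph.mem_edgeFinset, SimpleGraph.edgeSet_top]

lemma card_slots (n : ℕ) : (slots n).card = n.choose 2 := by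
  rw [slots, SimpleGraph.card_edgeFinset_top_eq_card_choose_two, Fintype.card_fin]

lemma edgeFinset_fromEdgeSet {n : ℕ} (S : Finset (Sym2 (Fin n))) (hS : S ⊆ slots n)
    [Fintype ((SimpleGraph.fromEdgeSet (↑S : Set (Sym2 (Fin n)))).edgeSet)] :
    (SimpleGraph.fromEdgeSet (↑S : Set (Sym2 (Fin n)))).edgeFinset = S := by
  apply Finset.coe_injective
  rw [SimpleGraph.coe_edgeFinset, SimpleGraph.edgeSet_fromEdgeSet]
  ext e
  simp only [Set.mem_diff, Finset.mem_coe, Set.mem_setOf_eq]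
  exact ⟨fun h => h.1, fun h => ⟨h, fun hd => (mem_slots.mp (hS h)) hd⟩⟩

lemma gnp_eq_PrW (n : ℕ) (p : ℝ) (P : SimpleGraph (Fin n) → Prop) :
    gnpProb n p P = PrW p (slots n) (fun S => P (SimpleGraph.fromEdgeSet ↑S)) := by
  classical
  unfold gnpProb PrW
  rw [← Finset.sum_filter]
  refine Finset.sum_nbij' (fun G => G.edgeFinset) (fun S => SimpleGraph.fromEdgeSet ↑S)
    ?_ ?_ ?_ ?_ ?_
  · intro G hG
    simp only [Finset.mem_filter, Finset.mem_univ, true_and, Finset.mem_powerset] at hG ⊢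
    constructor
    · exact SimpleGraph.edgeFinset_mono le_top
    · rw [SimpleGraph.coe_edgeFinset, SimpleGraph.fromEdgeSet_edgeSet]
      exact hG
  · intro S hS
    simp only [Finset.mem_filter, Finset.mem_univ, true_and, Finset.mem_powerset] at hS ⊢
    exact hS.2
  · intro G hG
    show SimpleGraph.fromEdgeSet ↑G.edgeFinset = G
    rw [SimpleGraph.coe_edgeFinset, SimpleGraph.fromEdgeSet_edgeSet]
  · intro S hS
    simp only [Finset.mem_filter, Finset.mem_powerset] at hS
    apply Finset.coe_injective
    rw [SimpleGraph.coe_edgeFinset, SimpleGraph.edgeSet_fromEdgeSet]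
    ext e
    simp only [Set.mem_diff, Finset.mem_coe, Set.mem_setOf_eq]
    exact ⟨fun h => h.1, fun h => ⟨h, fun hd => (mem_slots.mp (hS.1 h)) hd⟩⟩
  · intro G hG
    have hsub : G.edgeFinset ⊆ slots n := SimpleGraph.edgeFinset_mono le_top
    rw [prodw_eq_pow hsub, card_slots]
    have hn : G.edgeSet.ncard = G.edgeFinset.card := by
      rw [← SimpleGraph.coe_edgeFinset, Set.ncard_coe_finset]
    rw [hn]


/-- the k-th block embedding. -/
def bemb (n m : ℕ) (k : Fin (n / m)) : Fin m ↪ Fin n where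
  toFun i := ⟨k.val * m + i.val, by
    have h1 : k.val + 1 ≤ n / m := k.isLt
    have h2 : (k.val + 1) * m ≤ (n / m) * m := Nat.mul_le_mul_right m h1
    rw [Nat.succ_mul] at h2
    have h3 : (n / m) * m ≤ n := Nat.div_mul_le_self n m
    have h4 : i.val < m := i.isLt
    omega⟩
  inj' := by
    intro i j hij
    have : k.val * m + i.val = k.val * m + j.val := congrArg Fin.val hij
    exact Fin.ext (by omega)

lemma bemb_val {n m : ℕ} (k : Fin (n / m)) (i : Fin m) :
    (bemb n m k i).val = k.val * m + i.val := rfl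

open scoped Classical in
noncomputable def blockA (n m : ℕ) (k : Fin (n / m)) : Finset (Sym2 (Fin n)) :=
  ((⊤ : SimpleGraph (Fin m)).edgeFinset).image (Sym2.map (bemb n m k))

open scoped Classical in
noncomputable def blockPat (n m : ℕ) (D₀ : Fin m → Fin m → Prop) (k : Fin (n / m)) :
    Finset (Sym2 (Fin n)) :=
  ((SimpleGraph.fromRel D₀).edgeFinset).image (Sym2.map (bemb n m k))

lemma blockA_sub_slots {n m : ℕ} (k : Fin (n / m)) : blockA n m k ⊆ slots n := by
  classical
  intro e he
  rw [blockA, Finset.mem_image] at he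
  obtain ⟨e', he', rfl⟩ := he
  rw [mem_slots]
  induction e' with
  | _ a b =>
    rw [SimpleGraph.mem_edgeFinset, SimpleGraph.mem_edgeSet, SimpleGraph.top_adj] at he'
    simp only [Sym2.map_pair_eq, Sym2.isDiag_iff_proj_eq]
    exact fun hc => he' ((bemb n m k).injective hc)

lemma blockPat_sub_blockA {n m : ℕ} (D₀ : Fin m → Fin m → Prop) (k : Fin (n / m)) :
    blockPat n m D₀ k ⊆ blockA n m k := by
  classical
  apply Finset.image_subset_image
  apply SimpleGraph.edgeFinset_mono
  exact le_top

lemma blockA_card {n m : ℕ} (k : Fin (n / m)) : (blockA n m k).card = m.choose 2 := by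
  classical
  rw [blockA, Finset.card_image_of_injective _ (Sym2.map.injective (bemb n m k).injective)]
  rw [SimpleGraph.card_edgeFinset_top_eq_card_choose_two, Fintype.card_fin]

lemma mem_blockA_endpoints {n m : ℕ} {k : Fin (n / m)} {e : Sym2 (Fin n)}
    (he : e ∈ blockA n m k) : ∀ x ∈ e, ∃ i : Fin m, bemb n m k i = x := by
  classical
  rw [blockA, Finset.mem_image] at he
  obtain ⟨e', _, rfl⟩ := he
  intro x hx
  rw [Sym2.mem_map] at hx
  obtain ⟨y, _, rfl⟩ := hx
  exact ⟨y, rfl⟩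

lemma blockA_disjoint {n m : ℕ} (hm : 0 < m) {k l : Fin (n / m)} (hkl : k ≠ l) :
    Disjoint (blockA n m k) (blockA n m l) := by
  classical
  rw [Finset.disjoint_left]
  intro e hek hel
  obtain ⟨x, hx⟩ : ∃ x, x ∈ e := by
    induction e with
    | _ a b => exact ⟨a, Sym2.mem_mk_left a b⟩
  obtain ⟨i, hi⟩ := mem_blockA_endpoints hek x hx
  obtain ⟨j, hj⟩ := mem_blockA_endpoints hel x hx
  apply hkl
  have hval : k.val * m + i.val = l.val * m + j.val := by
    have := congrArg Fin.val (hi.trans hj.symm)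
    simpa [bemb_val] using this
  have hik : i.val < m := i.isLt
  have hjk : j.val < m := j.isLt
  have : k.val = l.val := by
    rcases Nat.lt_trichotomy k.val l.val with h | h | h
    · exfalso; nlinarith
    · exact h
    · exfalso; nlinarith
  exact Fin.ext this

lemma good_block_iso {n m : ℕ} {D₀ : Fin m → Fin m → Prop} {k : Fin (n / m)}
    {S : Finset (Sym2 (Fin n))}
    (hgood : S ∩ blockA n m k = blockPat n m D₀ k) :
    ∀ a b : Fin m, (SimpleGraph.fromEdgeSet (↑S : Set (Sym2 (Fin n)))).Adj
      (bemb n m k a) (bemb n m k b) ↔ (a ≠ b ∧ (D₀ a b ∨ D₀ b a)) := by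
  classical
  intro a b
  by_cases hab : a = b
  · subst hab
    simp only [SimpleGraph.irrefl, false_iff, not_and]
    intro hc
    exact absurd rfl hc
  · have hne : bemb n m k a ≠ bemb n m k b := fun hc => hab ((bemb n m k).injective hc)
    rw [SimpleGraph.fromEdgeSet_adj]
    have hAk : s(bemb n m k a, bemb n m k b) ∈ blockA n m k := by
      rw [blockA, Finset.mem_image]
      refine ⟨s(a, b), ?_, by rw [Sym2.map_pair_eq]⟩
      rw [SimpleGraph.mem_edgeFinset, SimpleGraph.mem_edgeSet, SimpleGraph.top_adj]
      exact hab
    constructor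
    · rintro ⟨hmem, -⟩
      have hpat : s(bemb n m k a, bemb n m k b) ∈ blockPat n m D₀ k := by
        rw [← hgood, Finset.mem_inter]
        exact ⟨hmem, hAk⟩
      rw [blockPat, Finset.mem_image] at hpat
      obtain ⟨e', he', heq⟩ := hpat
      have : e' = s(a, b) := by
        apply Sym2.map.injective (bemb n m k).injective
        rw [heq, Sym2.map_pair_eq]
      subst this
      rw [SimpleGraph.mem_edgeFinset, SimpleGraph.mem_edgeSet, SimpleGraph.fromRel_adj] at he'
      exact he'
    · rintro ⟨-, hD⟩
      refine ⟨?_, hne⟩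
      have hpat : s(bemb n m k a, bemb n m k b) ∈ blockPat n m D₀ k := by
        rw [blockPat, Finset.mem_image]
        refine ⟨s(a, b), ?_, by rw [Sym2.map_pair_eq]⟩
        rw [SimpleGraph.mem_edgeFinset, SimpleGraph.mem_edgeSet, SimpleGraph.fromRel_adj]
        exact ⟨hab, hD⟩
      have := (blockPat_sub_blockA D₀ k).trans (blockA_sub_slots k) hpat
      rw [← hgood, Finset.mem_inter] at hpat
      exact Finset.mem_coe.mpr hpat.1

open scoped Classical in
noncomputable def cutSlots {n : ℕ} (X : Finset (Fin n)) : Finset (Sym2 (Fin n)) :=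
  Xᶜ.biUnion (fun v => X.image (fun x => s(v, x)))

lemma cutSlots_pair_mem {n : ℕ} {X : Finset (Fin n)} {v : Fin n} (hv : v ∈ Xᶜ)
    {x : Fin n} (hx : x ∈ X) {v' : Fin n} (hv' : v' ∈ Xᶜ) {x' : Fin n} (hx' : x' ∈ X)
    (heq : s(v, x) = s(v', x')) : v = v' ∧ x = x' := by
  rw [Sym2.eq_iff] at heq
  rcases heq with ⟨rfl, rfl⟩ | ⟨rfl, rfl⟩
  · exact ⟨rfl, rfl⟩
  · exact absurd hx (Finset.mem_compl.mp hv')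

lemma cutSlots_sub_slots {n : ℕ} (X : Finset (Fin n)) : cutSlots X ⊆ slots n := by
  classical
  intro e he
  rw [cutSlots, Finset.mem_biUnion] at he
  obtain ⟨v, hv, he⟩ := he
  rw [Finset.mem_image] at he
  obtain ⟨x, hx, rfl⟩ := he
  rw [mem_slots, Sym2.isDiag_iff_proj_eq]
  intro hc
  have hvx : v = x := hc
  rw [hvx] at hv
  exact Finset.mem_compl.mp hv hx

lemma cutSlots_card {n : ℕ} (X : Finset (Fin n)) :
    (cutSlots X).card = Xᶜ.card * X.card := by
  classical
  rw [cutSlots, Finset.card_biUnion]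
  · have : ∀ v ∈ Xᶜ, (X.image (fun x => s(v, x))).card = X.card := by
      intro v hv
      apply Finset.card_image_of_injOn
      intro x hx y hy hxy
      exact ((cutSlots_pair_mem hv hx hv hy hxy).2)
    rw [Finset.sum_congr rfl this, Finset.sum_const, smul_eq_mul]
  · intro v hv w hw hvw
    rw [Function.onFun, Finset.disjoint_left]
    intro e hev hew
    rw [Finset.mem_image] at hev hew
    obtain ⟨x, hx, rfl⟩ := hev
    obtain ⟨y, hy, heq⟩ := hew
    exact hvw ((cutSlots_pair_mem hv hx hw hy heq.symm).1)

lemma cut_count {n : ℕ} {X : Finset (Fin n)} {S : Finset (Sym2 (Fin n))}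
    {v : Fin n} (hv : v ∈ Xᶜ) :
    (S ∩ X.image (fun x => s(v, x))).card
      = ((↑X ∩ {w | (SimpleGraph.fromEdgeSet (↑S : Set (Sym2 (Fin n)))).Adj v w}
          : Set (Fin n))).ncard := by
  classical
  have hset : (↑X ∩ {w | (SimpleGraph.fromEdgeSet (↑S : Set (Sym2 (Fin n)))).Adj v w}
      : Set (Fin n))
      = ↑(X.filter (fun x => (SimpleGraph.fromEdgeSet (↑S : Set (Sym2 (Fin n)))).Adj v x)) := by
    ext x
    simp only [Set.mem_inter_iff, Finset.mem_coe, Set.mem_setOf_eq, Finset.coe_filter,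
      Set.mem_setOf_eq]
  rw [hset, Set.ncard_coe_finset]
  have himg : S ∩ X.image (fun x => s(v, x))
      = (X.filter (fun x => (SimpleGraph.fromEdgeSet (↑S : Set (Sym2 (Fin n)))).Adj v x)).image
          (fun x => s(v, x)) := by
    ext e
    rw [Finset.mem_inter, Finset.mem_image, Finset.mem_image]
    constructor
    · rintro ⟨heS, x, hx, rfl⟩
      refine ⟨x, ?_, rfl⟩
      rw [Finset.mem_filter]
      refine ⟨hx, ?_⟩
      rw [SimpleGraph.fromEdgeSet_adj]
      exact ⟨Finset.mem_coe.mpr heS, fun hc => Finset.mem_compl.mp hv (hc ▸ hx)⟩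
    · rintro ⟨x, hx, rfl⟩
      rw [Finset.mem_filter] at hx
      obtain ⟨hxX, hadj⟩ := hx
      rw [SimpleGraph.fromEdgeSet_adj] at hadj
      exact ⟨Finset.mem_coe.mp hadj.1, x, hxX, rfl⟩
  rw [himg]
  apply Finset.card_image_of_injOn
  intro x hx y hy hxy
  have hxX : x ∈ X := (Finset.mem_filter.mp hx).1
  have hyX : y ∈ X := (Finset.mem_filter.mp hy).1
  exact (cutSlots_pair_mem hv hxX hv hyX hxy).2

lemma cut_bad_le {n : ℕ} {X : Finset (Fin n)} {S : Finset (Sym2 (Fin n))}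
    (hbad : ∀ v ∈ Xᶜ,
      2 * ((↑X ∩ {w | (SimpleGraph.fromEdgeSet (↑S : Set (Sym2 (Fin n)))).Adj v w}
        : Set (Fin n))).ncard ≤ X.card) :
    2 * (S ∩ cutSlots X).card ≤ (cutSlots X).card := by
  classical
  have hsplit : S ∩ cutSlots X = Xᶜ.biUnion (fun v => S ∩ X.image (fun x => s(v, x))) := by
    rw [cutSlots, Finset.inter_biUnion]
  rw [hsplit, Finset.card_biUnion, cutSlots_card]
  · rw [Finset.mul_sum]
    calc ∑ v ∈ Xᶜ, 2 * (S ∩ X.image (fun x => s(v, x))).card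
        ≤ ∑ v ∈ Xᶜ, X.card := by
          apply Finset.sum_le_sum
          intro v hv
          rw [cut_count hv]
          exact hbad v hv
      _ = Xᶜ.card * X.card := by rw [Finset.sum_const, smul_eq_mul]
  · intro v hv w hw hvw
    rw [Function.onFun, Finset.disjoint_left]
    intro e hev hew
    rw [Finset.mem_inter, Finset.mem_image] at hev hew
    obtain ⟨-, x, hx, rfl⟩ := hev
    obtain ⟨-, y, hy, heq⟩ := hew
    exact hvw ((cutSlots_pair_mem hv hx hw hy heq.symm).1)


lemma indexOf_ge_of_mem_drop {α : Type*} [DecidableEq α] {L : List α} (hnd : L.Nodup)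
    {k : ℕ} {w : α} (hw : w ∈ L.drop k) : k ≤ L.idxOf w := by
  by_contra h
  push_neg at h
  have hwL : w ∈ L := List.mem_of_mem_drop hw
  have hlt : L.idxOf w < L.length := List.idxOf_lt_length_iff.mpr hwL
  have hidx : L[L.idxOf w] = w := List.getElem_idxOf hlt
  have hmin : L.idxOf w < min k L.length := lt_min h hlt
  have htake : w ∈ L.take k := by
    have : (L.take k)[L.idxOf w]'(by simpa using hmin) = w := by
      rw [List.getElem_take]; exact hidx
    rw [← this]
    exact List.getElem_mem _
  have hdisj : (L.take k).Disjoint (L.drop k) := by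
    apply List.disjoint_of_nodup_append
    rw [List.take_append_drop]
    exact hnd
  exact hdisj htake hw

lemma mem_drop_of_lt_indexOf {α : Type*} [DecidableEq α] {L : List α} {k : ℕ} {w : α}
    (hw : w ∈ L) (h : k ≤ L.idxOf w) : w ∈ L.drop k := by
  have hlt : L.idxOf w < L.length := List.idxOf_lt_length_iff.mpr hw
  have hidx : L[L.idxOf w] = w := List.getElem_idxOf hlt
  obtain ⟨d, hd⟩ := Nat.exists_eq_add_of_le h
  simp only [hd] at hidx
  have hlen : d < (L.drop k).length := by
    rw [List.length_drop]; omega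
  have hfin : (L.drop k)[d] = w := by
    rw [List.getElem_drop]
    exact hidx
  rw [← hfin]
  exact List.getElem_mem _

lemma core {n m : ℕ} (hm : 0 < m) (G : SimpleGraph (Fin n)) (D₀ : Fin m → Fin m → Prop)
    (hOG : OrientedGraph D₀) (hno : ∀ v, ¬ SeymourVertex D₀ v)
    (emb : Fin m ↪ Fin n)
    (hiso : ∀ a b : Fin m, G.Adj (emb a) (emb b) ↔ (a ≠ b ∧ (D₀ a b ∨ D₀ b a)))
    (hcut : ∀ X : Finset (Fin n), Finset.univ.map emb ⊆ X → X ≠ Finset.univ →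
      ∃ v ∈ Xᶜ, X.card < 2 * ((↑X ∩ {w | G.Adj v w} : Set (Fin n))).ncard) :
    ∃ Dd : Fin n → Fin n → Prop, Orients Dd G ∧ ∀ v, ¬ SeymourVertex Dd v := by
  classical
  set B : Finset (Fin n) := Finset.univ.map emb with hB
  have hBcard : B.card = m := by rw [hB, Finset.card_map, Finset.card_univ, Fintype.card_fin]
  have hmn : m ≤ n := by
    have := Finset.card_le_univ B
    simpa [hBcard] using this
  -- build the greedy list
  have hlist : ∀ t, t ≤ Bᶜ.card → ∃ L : List (Fin n), L.Nodup ∧ L.length = t ∧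
      L.toFinset ⊆ Bᶜ ∧ ∀ (i : ℕ) (hi : i < L.length),
        ((L.drop (i+1)).toFinset ∪ B).card
          < 2 * ((↑((L.drop (i+1)).toFinset ∪ B) ∩ {w | G.Adj (L.get ⟨i, hi⟩) w}
              : Set (Fin n))).ncard := by
    intro t
    induction t with
    | zero =>
      intro _
      refine ⟨[], List.nodup_nil, rfl, by simp, ?_⟩
      intro i hi
      simp at hi
    | succ t ih =>
      intro ht
      obtain ⟨L, hnd, hlen, hsub, hinv⟩ := ih (le_trans (Nat.le_succ t) ht)
      have hXne : L.toFinset ∪ B ≠ Finset.univ := by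
        intro hXU
        have h1 : (L.toFinset ∪ B).card ≤ t + m := by
          refine le_trans (Finset.card_union_le _ _) ?_
          have : L.toFinset.card = t := by
            rw [List.toFinset_card_of_nodup hnd, hlen]
          omega
        rw [hXU, Finset.card_univ, Fintype.card_fin] at h1
        have hcompl : Bᶜ.card = n - m := by
          rw [Finset.card_compl, hBcard, Fintype.card_fin]
        omega
      obtain ⟨v, hv, hvcut⟩ := hcut (L.toFinset ∪ B) Finset.subset_union_right hXne
      rw [Finset.mem_compl, Finset.mem_union] at hv
      push_neg at hv
      refine ⟨v :: L, ?_, ?_, ?_, ?_⟩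
      · exact List.nodup_cons.mpr ⟨fun hc => hv.1 (List.mem_toFinset.mpr hc), hnd⟩
      · simp [hlen]
      · intro x hx
        rw [List.toFinset_cons, Finset.mem_insert] at hx
        rcases hx with rfl | hx
        · exact Finset.mem_compl.mpr hv.2
        · exact hsub hx
      · intro i hi
        match i with
        | 0 =>
          simpa using hvcut
        | (j+1) =>
          have hj : j < L.length := by simpa using hi
          simpa using hinv j hj
  obtain ⟨L, hnd, hlen, hsub, hinv⟩ := hlist Bᶜ.card le_rfl
  have hfull : L.toFinset = Bᶜ := by
    apply Finset.eq_of_subset_of_card_le hsub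
    rw [List.toFinset_card_of_nodup hnd, hlen]
  have hmemL : ∀ x : Fin n, x ∈ L ↔ x ∉ B := by
    intro x
    rw [← List.mem_toFinset, hfull, Finset.mem_compl]
  -- the inverse of emb
  have : Nonempty (Fin m) := ⟨⟨0, hm⟩⟩
  set inv' : Fin n → Fin m := Function.invFun emb with hinv'
  have hInv : ∀ a : Fin m, inv' (emb a) = a :=
    Function.leftInverse_invFun emb.injective
  have hmemB : ∀ x : Fin n, x ∈ B ↔ ∃ a : Fin m, emb a = x := by
    intro x
    simp [hB]
  -- irreflexivity-type facts about D₀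
  have hD₀ne : ∀ a b : Fin m, D₀ a b → a ≠ b := by
    intro a b hab heq
    subst heq
    exact hOG a a hab hab
  -- the orientation
  set Dd : Fin n → Fin n → Prop := fun u w => G.Adj u w ∧
    ((u ∉ B ∧ w ∈ B) ∨ (u ∈ B ∧ w ∈ B ∧ D₀ (inv' u) (inv' w)) ∨
      (u ∉ B ∧ w ∉ B ∧ L.idxOf u < L.idxOf w)) with hDd
  refine ⟨Dd, ⟨?_, ?_⟩, ?_⟩
  · -- asymmetry
    rintro u w ⟨hadj, hc⟩ ⟨hadj', hc'⟩
    rcases hc with ⟨hu, hw⟩ | ⟨hu, hw, hD⟩ | ⟨hu, hw, hlt⟩ <;>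
      rcases hc' with ⟨hu', hw'⟩ | ⟨hu', hw', hD'⟩ | ⟨hu', hw', hlt'⟩
    · exact hu' hw
    · exact hu hw'
    · exact hu' hw
    · exact hu' hw
    · exact hOG _ _ hD hD'
    · exact hu' hw
    · exact hu hw'
    · exact hw hu'
    · omega
  · -- Adj iff
    intro u w
    constructor
    · intro hadj
      by_cases hu : u ∈ B <;> by_cases hw : w ∈ B
      · obtain ⟨a, rfl⟩ := (hmemB u).mp hu
        obtain ⟨b, rfl⟩ := (hmemB w).mp hw
        obtain ⟨hne, hD | hD⟩ := (hiso a b).mp hadj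
        · exact Or.inl ⟨hadj, Or.inr (Or.inl ⟨hu, hw, by rw [hInv, hInv]; exact hD⟩)⟩
        · exact Or.inr ⟨hadj.symm, Or.inr (Or.inl ⟨hw, hu, by rw [hInv, hInv]; exact hD⟩)⟩
      · exact Or.inr ⟨hadj.symm, Or.inl ⟨hw, hu⟩⟩
      · exact Or.inl ⟨hadj, Or.inl ⟨hu, hw⟩⟩
      · have huL : u ∈ L := (hmemL u).mpr hu
        have hwL : w ∈ L := (hmemL w).mpr hw
        have hne : L.idxOf u ≠ L.idxOf w := by
          intro hc
          exact hadj.ne ((List.idxOf_inj huL).mp hc)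
        rcases lt_or_gt_of_ne hne with h | h
        · exact Or.inl ⟨hadj, Or.inr (Or.inr ⟨hu, hw, h⟩)⟩
        · exact Or.inr ⟨hadj.symm, Or.inr (Or.inr ⟨hw, hu, h⟩)⟩
    · rintro (⟨h, _⟩ | ⟨h, _⟩)
      · exact h
      · exact h.symm
  · -- no Seymour vertex
    intro v
    by_cases hv : v ∈ B
    · -- vertices in the base copy
      obtain ⟨a, rfl⟩ := (hmemB v).mp hv
      have e1 : outNbr Dd (emb a) = emb '' outNbr D₀ a := by
        ext w
        simp only [outNbr, Set.mem_setOf_eq, Set.mem_image]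
        constructor
        · rintro ⟨hne, hadj, hc⟩
          rcases hc with ⟨hu, _⟩ | ⟨_, hwB, hD⟩ | ⟨hu, _, _⟩
          · exact absurd hv hu
          · obtain ⟨b, rfl⟩ := (hmemB w).mp hwB
            rw [hInv, hInv] at hD
            exact ⟨b, ⟨fun hc => hne (congrArg emb hc), hD⟩, rfl⟩
          · exact absurd hv hu
        · rintro ⟨b, ⟨hbne, hD⟩, rfl⟩
          have hne : a ≠ b := hD₀ne a b hD
          have hadj : G.Adj (emb a) (emb b) := (hiso a b).mpr ⟨hne, Or.inl hD⟩
          refine ⟨fun hc => hbne (emb.injective hc), hadj, Or.inr (Or.inl ⟨hv, ?_, ?_⟩)⟩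
          · exact (hmemB (emb b)).mpr ⟨b, rfl⟩
          · rw [hInv, hInv]; exact hD
      have e2 : outNbr2 Dd (emb a) = emb '' outNbr2 D₀ a := by
        ext w
        simp only [outNbr2, Set.mem_setOf_eq, Set.mem_image]
        constructor
        · rintro ⟨hnotin, u, huN1, harc⟩
          rw [e1] at huN1
          obtain ⟨b, hbN1, rfl⟩ := huN1
          obtain ⟨hadj, hc⟩ := harc
          have hbB : emb b ∈ B := (hmemB (emb b)).mpr ⟨b, rfl⟩
          rcases hc with ⟨hu, _⟩ | ⟨_, hwB, hD⟩ | ⟨hu, _, _⟩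
          · exact absurd hbB hu
          · obtain ⟨c, rfl⟩ := (hmemB w).mp hwB
            rw [hInv, hInv] at hD
            refine ⟨c, ⟨?_, ⟨b, hbN1, hD⟩⟩, rfl⟩
            intro hc
            apply hnotin
            rw [e1]
            rcases Set.mem_insert_iff.mp hc with rfl | hcN
            · exact Set.mem_insert _ _
            · exact Set.mem_insert_iff.mpr (Or.inr ⟨c, hcN, rfl⟩)
          · exact absurd hbB hu
        · rintro ⟨c, ⟨hcnot, b, hbN1, hD⟩, rfl⟩
          constructor
          · rw [e1]
            intro hc
            apply hcnot
            rcases Set.mem_insert_iff.mp hc with hc' | ⟨c', hc', hcc⟩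
            · rw [emb.injective hc']; exact Set.mem_insert _ _
            · rw [← emb.injective hcc]
              exact Set.mem_insert_iff.mpr (Or.inr hc')
          · refine ⟨emb b, ?_, ?_⟩
            · rw [e1]; exact ⟨b, hbN1, rfl⟩
            · have hne : b ≠ c := hD₀ne b c hD
              have hadj : G.Adj (emb b) (emb c) := (hiso b c).mpr ⟨hne, Or.inl hD⟩
              refine ⟨hadj, Or.inr (Or.inl ⟨?_, ?_, ?_⟩)⟩
              · exact (hmemB (emb b)).mpr ⟨b, rfl⟩
              · exact (hmemB (emb c)).mpr ⟨c, rfl⟩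
              · rw [hInv, hInv]; exact hD
      intro hSey
      apply hno a
      unfold SeymourVertex at hSey ⊢
      rwa [e1, e2, Set.ncard_image_of_injective _ emb.injective,
        Set.ncard_image_of_injective _ emb.injective] at hSey
    · -- prefix vertices
      have hvL : v ∈ L := (hmemL v).mpr hv
      set i : ℕ := L.idxOf v with hidef
      have hi : i < L.length := List.idxOf_lt_length_iff.mpr hvL
      have hgetv : L.get ⟨i, hi⟩ = v := List.idxOf_get hi
      set X : Finset (Fin n) := (L.drop (i+1)).toFinset ∪ B with hXdef
      have key := hinv i hi
      rw [hgetv] at key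
      rw [show (List.drop (i+1) L).toFinset ∪ B = X from rfl] at key
      have hvX : v ∉ X := by
        rw [hXdef, Finset.mem_union]
        rintro (hc | hc)
        · have := indexOf_ge_of_mem_drop hnd (List.mem_toFinset.mp hc)
          omega
        · exact hv hc
      have e1 : outNbr Dd v = ↑X ∩ {w | G.Adj v w} := by
        ext w
        simp only [outNbr, Set.mem_setOf_eq, Set.mem_inter_iff, Finset.mem_coe]
        constructor
        · rintro ⟨hne, hadj, hc⟩
          refine ⟨?_, hadj⟩
          rw [hXdef, Finset.mem_union]
          rcases hc with ⟨_, hwB⟩ | ⟨huB, _⟩ | ⟨_, hwB, hlt⟩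
          · exact Or.inr hwB
          · exact absurd huB hv
          · refine Or.inl (List.mem_toFinset.mpr ?_)
            exact mem_drop_of_lt_indexOf ((hmemL w).mpr hwB) (by omega)
        · rintro ⟨hwX, hadj⟩
          refine ⟨hadj.ne', hadj, ?_⟩
          rw [hXdef, Finset.mem_union] at hwX
          rcases hwX with hwD | hwB
          · have hwL : w ∈ L.drop (i+1) := List.mem_toFinset.mp hwD
            have hwnB : w ∉ B := (hmemL w).mp (List.mem_of_mem_drop hwL)
            have hge : i + 1 ≤ L.idxOf w := indexOf_ge_of_mem_drop hnd hwL
            exact Or.inr (Or.inr ⟨hv, hwnB, by omega⟩)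
          · exact Or.inl ⟨hv, hwB⟩
      have e2 : outNbr2 Dd v ⊆ ↑X \ insert v (outNbr Dd v) := by
        rintro w ⟨hnotin, u, huN1, harc⟩
        have huX : u ∈ X := by
          have hmem := e1 ▸ huN1
          exact Finset.mem_coe.mp hmem.1
        obtain ⟨hadj, hc⟩ := harc
        have hwX : w ∈ X := by
          rw [hXdef, Finset.mem_union] at huX ⊢
          rcases hc with ⟨hunB, hwB⟩ | ⟨huB, hwB, _⟩ | ⟨hunB, hwnB, hlt⟩
          · exact Or.inr hwB
          · exact Or.inr hwB
          · rcases huX with huD | huB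
            · have hgeu : i + 1 ≤ L.idxOf u :=
                indexOf_ge_of_mem_drop hnd (List.mem_toFinset.mp huD)
              refine Or.inl (List.mem_toFinset.mpr ?_)
              exact mem_drop_of_lt_indexOf ((hmemL w).mpr hwnB) (by omega)
            · exact absurd huB hunB
        exact ⟨Finset.mem_coe.mpr hwX, hnotin⟩
      intro hSey
      unfold SeymourVertex at hSey
      have hn1 : (outNbr Dd v).ncard = ((↑X ∩ {w | G.Adj v w} : Set (Fin n))).ncard := by
        rw [e1]
      have hsub1 : (↑X ∩ {w | G.Adj v w} : Set (Fin n)) ⊆ ↑X := Set.inter_subset_left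
      have hle1 : ((↑X ∩ {w | G.Adj v w} : Set (Fin n))).ncard ≤ X.card := by
        rw [← Set.ncard_coe_finset X]
        exact Set.ncard_le_ncard hsub1 (Set.toFinite _)
      have hn2 : (outNbr2 Dd v).ncard ≤ X.card - (outNbr Dd v).ncard := by
        refine le_trans (Set.ncard_le_ncard e2 ?_) ?_
        · exact Set.Finite.subset (Set.toFinite _) Set.diff_subset
        · have hsub2 : insert v (outNbr Dd v) ∩ (↑X : Set (Fin n)) = outNbr Dd v := by
            rw [e1]
            ext x
            simp only [Set.mem_inter_iff, Set.mem_insert_iff, Set.mem_setOf_eq,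
              Set.mem_inter_iff, Finset.mem_coe]
            constructor
            · rintro ⟨rfl | hx, hX⟩
              · exact absurd hX hvX
              · exact hx
            · rintro ⟨hX, hadj⟩
              exact ⟨Or.inr ⟨hX, hadj⟩, hX⟩
          have : (↑X \ insert v (outNbr Dd v) : Set (Fin n)) =
              ↑X \ (insert v (outNbr Dd v) ∩ ↑X) := by
            rw [Set.diff_inter_self_eq_diff]
          rw [this, hsub2, Set.ncard_diff ?_ (Set.toFinite _), Set.ncard_coe_finset]
          rw [e1]
          exact Set.inter_subset_left
      omega


-- GLUE TBD

-- ===================== glue =====================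

lemma prodw_pat_ge {n m : ℕ} {p : ℝ} (h0 : 0 ≤ p) (h1 : p ≤ 1)
    (D₀ : Fin m → Fin m → Prop) (k : Fin (n / m)) :
    (min p (1 - p)) ^ m.choose 2 ≤ prodw p (blockA n m k) (blockPat n m D₀ k) := by
  classical
  have hsub := blockPat_sub_blockA D₀ k
  rw [prodw_eq_pow hsub, blockA_card]
  have hmin0 : 0 ≤ min p (1 - p) := le_min h0 (by linarith)
  have hcard : (blockPat n m D₀ k).card ≤ m.choose 2 := by
    rw [← blockA_card k]
    exact Finset.card_le_card hsub
  calc (min p (1 - p)) ^ m.choose 2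
      = (min p (1 - p)) ^ (blockPat n m D₀ k).card
        * (min p (1 - p)) ^ (m.choose 2 - (blockPat n m D₀ k).card) := by
        rw [← pow_add]
        congr 1
        omega
    _ ≤ p ^ (blockPat n m D₀ k).card * (1 - p) ^ (m.choose 2 - (blockPat n m D₀ k).card) := by
        apply mul_le_mul
        · exact pow_le_pow_left₀ hmin0 (min_le_left _ _) _
        · exact pow_le_pow_left₀ hmin0 (min_le_right _ _) _
        · exact pow_nonneg hmin0 _
        · exact pow_nonneg h0 _

/-- decomposition: if every orientation of the graph of `S` has a Seymour vertex, then
either every block misses the pattern, or some cut is bad. -/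
lemma decomposition {n m : ℕ} (hm : 0 < m) (D₀ : Fin m → Fin m → Prop)
    (hOG : OrientedGraph D₀) (hno : ∀ v, ¬ SeymourVertex D₀ v)
    (S : Finset (Sym2 (Fin n)))
    (hprop : ∀ D : Fin n → Fin n → Prop,
      Orients D (SimpleGraph.fromEdgeSet (↑S : Set (Sym2 (Fin n)))) → ∃ v, SeymourVertex D v) :
    (∀ k : Fin (n / m), S ∩ blockA n m k ≠ blockPat n m D₀ k) ∨
    (∃ X ∈ Finset.univ.powerset.filter
        (fun X : Finset (Fin n) => X.Nonempty ∧ X ≠ Finset.univ),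
      ∀ v ∈ Xᶜ, 2 * ((↑X ∩ {w | (SimpleGraph.fromEdgeSet (↑S : Set (Sym2 (Fin n)))).Adj v w}
        : Set (Fin n))).ncard ≤ X.card) := by
  classical
  by_contra hcon
  push_neg at hcon
  obtain ⟨h1, h2⟩ := hcon
  obtain ⟨k, hk⟩ := h1
  have hcut : ∀ X : Finset (Fin n), Finset.univ.map (bemb n m k) ⊆ X → X ≠ Finset.univ →
      ∃ v ∈ Xᶜ, X.card < 2 * ((↑X ∩ {w | (SimpleGraph.fromEdgeSet
        (↑S : Set (Sym2 (Fin n)))).Adj v w} : Set (Fin n))).ncard := by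
    intro X hBX hXne
    have hXmem : X ∈ Finset.univ.powerset.filter
        (fun X : Finset (Fin n) => X.Nonempty ∧ X ≠ Finset.univ) := by
      rw [Finset.mem_filter, Finset.mem_powerset]
      refine ⟨Finset.subset_univ X, ?_, hXne⟩
      have : (bemb n m k ⟨0, hm⟩) ∈ Finset.univ.map (bemb n m k) := by
        rw [Finset.mem_map]
        exact ⟨⟨0, hm⟩, Finset.mem_univ _, rfl⟩
      exact ⟨_, hBX this⟩
    obtain ⟨v, hv, hlt⟩ := h2 X hXmem
    exact ⟨v, hv, hlt⟩
  obtain ⟨Dd, hor, hnos⟩ := core hm (SimpleGraph.fromEdgeSet (↑S : Set (Sym2 (Fin n)))) D₀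
    hOG hno (bemb n m k) (good_block_iso hk) hcut
  obtain ⟨v, hv⟩ := hprop Dd hor
  exact hnos v hv

lemma prob_bound {m : ℕ} (hm : 0 < m) {p : ℝ} (hp : 1/2 < p) (hp1 : p < 1)
    (D₀ : Fin m → Fin m → Prop) (hOG : OrientedGraph D₀) (hno : ∀ v, ¬ SeymourVertex D₀ v)
    (n : ℕ) :
    gnpProb n p (fun G => ∀ D : Fin n → Fin n → Prop, Orients D G → ∃ v, SeymourVertex D v)
      ≤ (1 - (min p (1 - p)) ^ m.choose 2) ^ (n / m)
        + ∑ X ∈ Finset.univ.powerset.filter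
            (fun X : Finset (Fin n) => X.Nonempty ∧ X ≠ Finset.univ),
          (2 * Real.sqrt (p * (1 - p))) ^ (Xᶜ.card * X.card) := by
  classical
  have hp0 : (0:ℝ) ≤ p := by linarith
  have hp1' : p ≤ 1 := le_of_lt hp1
  rw [gnp_eq_PrW]
  set 𝒳 : Finset (Finset (Fin n)) := Finset.univ.powerset.filter
    (fun X : Finset (Fin n) => X.Nonempty ∧ X ≠ Finset.univ) with h𝒳
  have hmono : PrW p (slots n) (fun S => ∀ D : Fin n → Fin n → Prop,
      Orients D (SimpleGraph.fromEdgeSet (↑S : Set (Sym2 (Fin n)))) → ∃ v, SeymourVertex D v)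
      ≤ PrW p (slots n) (fun S =>
        (∀ k : Fin (n / m), S ∩ blockA n m k ≠ blockPat n m D₀ k) ∨
        (∃ X ∈ 𝒳, ∀ v ∈ Xᶜ,
          2 * ((↑X ∩ {w | (SimpleGraph.fromEdgeSet (↑S : Set (Sym2 (Fin n)))).Adj v w}
            : Set (Fin n))).ncard ≤ X.card)) := by
    apply PrW_mono hp0 hp1'
    intro S _ hprop
    exact decomposition hm D₀ hOG hno S hprop
  refine le_trans hmono (le_trans (PrW_or hp0 hp1' _ _ _) ?_)
  gcongr
  · -- block part
    set q₀ : ℝ := (min p (1 - p)) ^ m.choose 2 with hq₀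
    have hq₀0 : 0 ≤ q₀ := by
      apply pow_nonneg
      exact le_min hp0 (by linarith)
    set lst : List (Finset (Sym2 (Fin n)) × Finset (Sym2 (Fin n))) :=
      (List.finRange (n / m)).map (fun k => (blockA n m k, blockPat n m D₀ k)) with hlst
    have hcongr : PrW p (slots n)
        (fun S => ∀ k : Fin (n / m), S ∩ blockA n m k ≠ blockPat n m D₀ k)
        = PrW p (slots n) (fun S => ∀ pr ∈ lst, S ∩ pr.1 ≠ pr.2) := by
      apply PrW_congr
      intro S _
      constructor
      · intro h pr hpr
        rw [hlst, List.mem_map] at hpr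
        obtain ⟨k, _, rfl⟩ := hpr
        exact h k
      · intro h k
        exact h (blockA n m k, blockPat n m D₀ k)
          (by rw [hlst, List.mem_map]; exact ⟨k, List.mem_finRange k, rfl⟩)
    rw [hcongr]
    have hlen : lst.length = n / m := by
      rw [hlst, List.length_map, List.length_finRange]
    rw [← hlen]
    apply blocks_bound hp0 hp1' hq₀0 lst (slots n)
    · intro pr hpr
      rw [hlst, List.mem_map] at hpr
      obtain ⟨k, _, rfl⟩ := hpr
      exact ⟨blockA_sub_slots k, blockPat_sub_blockA D₀ k, prodw_pat_ge hp0 hp1' D₀ k⟩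
    · rw [hlst]
      rw [List.pairwise_map]
      have hnd : (List.finRange (n / m)).Nodup := List.nodup_finRange _
      exact List.Pairwise.imp (fun hab => blockA_disjoint hm hab) hnd
  · -- cut part
    refine le_trans (PrW_exists hp0 hp1' (slots n) 𝒳 _) ?_
    apply Finset.sum_le_sum
    intro X _
    refine le_trans
      (PrW_mono hp0 hp1' (slots n)
        (B := fun S => 2 * (S ∩ cutSlots X).card ≤ (cutSlots X).card)
        (fun S _ hbad => cut_bad_le hbad)) ?_
    rw [← cutSlots_card]
    exact chernoff hp hp1 (slots n) (cutSlots X) (cutSlots_sub_slots X)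

lemma cut_sum_bound {n : ℕ} {σ : ℝ} (hσ0 : 0 ≤ σ) (hσ1 : σ ≤ 1)
    (hns : (n:ℝ) * σ ^ n ≤ 1) :
    ∑ X ∈ Finset.univ.powerset.filter
        (fun X : Finset (Fin n) => X.Nonempty ∧ X ≠ Finset.univ),
      (σ ^ 2) ^ (Xᶜ.card * X.card) ≤ 2 * (n:ℝ) ^ 2 * σ ^ n := by
  classical
  set 𝒳 : Finset (Finset (Fin n)) := Finset.univ.powerset.filter
    (fun X : Finset (Fin n) => X.Nonempty ∧ X ≠ Finset.univ) with h𝒳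
  have hXfacts : ∀ X ∈ 𝒳, 1 ≤ X.card ∧ X.card < n ∧ Xᶜ.card = n - X.card := by
    intro X hX
    rw [h𝒳, Finset.mem_filter] at hX
    obtain ⟨-, hne, hproper⟩ := hX
    refine ⟨Finset.card_pos.mpr hne, ?_, ?_⟩
    · have h1 : X.card ≤ n := by
        have := Finset.card_le_univ X
        simpa using this
      have h2 : X.card ≠ n := by
        intro hc
        apply hproper
        apply Finset.eq_univ_of_card
        simpa using hc
      omega
    · rw [Finset.card_compl]
      simp
  have hσn0 : 0 ≤ σ ^ n := pow_nonneg hσ0 n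
  -- step 1: termwise reduction to (σ^n)^(min)
  have step1 : ∑ X ∈ 𝒳, (σ ^ 2) ^ (Xᶜ.card * X.card)
      ≤ ∑ X ∈ 𝒳, (σ ^ n) ^ (min X.card Xᶜ.card) := by
    apply Finset.sum_le_sum
    intro X hX
    obtain ⟨ha1, han, hb⟩ := hXfacts X hX
    set a := X.card
    have hkey : n * min a (n - a) ≤ 2 * ((n - a) * a) := by
      rcases le_total a (n - a) with h | h
      · rw [min_eq_left h]
        calc n * a ≤ (2 * (n - a)) * a := Nat.mul_le_mul_right a (by omega)
          _ = 2 * ((n - a) * a) := by ring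
      · rw [min_eq_right h]
        calc n * (n - a) ≤ (2 * a) * (n - a) := Nat.mul_le_mul_right _ (by omega)
          _ = 2 * ((n - a) * a) := by ring
    rw [hb]
    calc (σ ^ 2) ^ ((n - a) * a) = σ ^ (2 * ((n - a) * a)) := by rw [← pow_mul]
      _ ≤ σ ^ (n * min a (n - a)) := pow_le_pow_of_le_one hσ0 hσ1 hkey
      _ = (σ ^ n) ^ (min a (n - a)) := by rw [← pow_mul]
  refine le_trans step1 ?_
  -- step 2: fiberwise count
  have hmaps : ∀ X ∈ 𝒳, min X.card Xᶜ.card ∈ Finset.Icc 1 n := by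
    intro X hX
    obtain ⟨ha1, han, hb⟩ := hXfacts X hX
    rw [Finset.mem_Icc]
    constructor
    · rw [hb]
      omega
    · exact le_trans (min_le_left _ _) (by omega)
  rw [← Finset.sum_fiberwise_of_maps_to hmaps]
  have hinner : ∀ s' ∈ Finset.Icc 1 n,
      ∑ X ∈ 𝒳.filter (fun X => min X.card Xᶜ.card = s'), (σ ^ n) ^ (min X.card Xᶜ.card)
        ≤ (2 * (n:ℝ) ^ s') * (σ ^ n) ^ s' := by
    intro s' hs'
    rw [Finset.mem_Icc] at hs'
    have hval : ∀ X ∈ 𝒳.filter (fun X => min X.card Xᶜ.card = s'),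
        (σ ^ n) ^ (min X.card Xᶜ.card) = (σ ^ n) ^ s' := by
      intro X hX
      rw [Finset.mem_filter] at hX
      rw [hX.2]
    rw [Finset.sum_congr rfl hval, Finset.sum_const, nsmul_eq_mul]
    apply mul_le_mul_of_nonneg_right _ (pow_nonneg hσn0 _)
    -- card bound
    have hsub : 𝒳.filter (fun X => min X.card Xᶜ.card = s')
        ⊆ Finset.powersetCard s' Finset.univ ∪ Finset.powersetCard (n - s') Finset.univ := by
      intro X hX
      rw [Finset.mem_filter] at hX
      obtain ⟨hX𝒳, hmin⟩ := hX
      obtain ⟨ha1, han, hb⟩ := hXfacts X hX𝒳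
      rw [Finset.mem_union, Finset.mem_powersetCard_univ, Finset.mem_powersetCard_univ]
      rcases min_eq_iff.mp hmin with ⟨h, -⟩ | ⟨h, -⟩
      · exact Or.inl h
      · right
        rw [hb] at h
        omega
    have hcard : (𝒳.filter (fun X => min X.card Xᶜ.card = s')).card ≤ 2 * n ^ s' := by
      refine le_trans (Finset.card_le_card hsub) (le_trans (Finset.card_union_le _ _) ?_)
      rw [Finset.card_powersetCard, Finset.card_powersetCard]
      simp only [Finset.card_univ, Fintype.card_fin]
      have h1 : n.choose s' ≤ n ^ s' := Nat.choose_le_pow n s'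
      have h2 : n.choose (n - s') = n.choose s' := Nat.choose_symm hs'.2
      omega
    calc ((𝒳.filter (fun X => min X.card Xᶜ.card = s')).card : ℝ)
        ≤ ((2 * n ^ s' : ℕ) : ℝ) := by exact_mod_cast hcard
      _ = 2 * (n:ℝ) ^ s' := by push_cast; ring
  refine le_trans (Finset.sum_le_sum hinner) ?_
  -- step 3: geometric sum
  have hterm : ∀ s' ∈ Finset.Icc 1 n,
      (2 * (n:ℝ) ^ s') * (σ ^ n) ^ s' ≤ 2 * ((n:ℝ) * σ ^ n) := by
    intro s' hs'
    rw [Finset.mem_Icc] at hs'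
    have : (2 * (n:ℝ) ^ s') * (σ ^ n) ^ s' = 2 * ((n:ℝ) * σ ^ n) ^ s' := by
      rw [mul_pow]; ring
    rw [this]
    apply mul_le_mul_of_nonneg_left _ (by norm_num)
    calc ((n:ℝ) * σ ^ n) ^ s' ≤ ((n:ℝ) * σ ^ n) ^ 1 :=
        pow_le_pow_of_le_one (by positivity) hns hs'.1
      _ = (n:ℝ) * σ ^ n := pow_one _
  refine le_trans (Finset.sum_le_sum hterm) ?_
  rw [Finset.sum_const, Nat.card_Icc, nsmul_eq_mul]
  have : ((n + 1 - 1 : ℕ) : ℝ) = (n : ℝ) := by push_cast; ring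
  rw [this]
  calc (n:ℝ) * (2 * ((n:ℝ) * σ ^ n)) = 2 * (n:ℝ) ^ 2 * σ ^ n := by ring
    _ ≤ 2 * (n:ℝ) ^ 2 * σ ^ n := le_refl _

/-- for fixed `p ∈ (1/2, 1)`, if with probability bounded away from `0`
(for infinitely many `n`) every orientation of `G(n,p)` has a Seymour vertex, then every
(nonempty) oriented graph has a Seymour vertex. -/
theorem stmt_2 (p : ℝ) (hp0 : 1/2 < p) (hp1 : p < 1)
    (h : ∃ c > (0 : ℝ), ∃ᶠ n in atTop,
      c ≤ gnpProb n p (fun G =>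
        ∀ D : Fin n → Fin n → Prop, Orients D G → ∃ v, SeymourVertex D v)) :
    ∀ (m : ℕ), 0 < m → ∀ D : Fin m → Fin m → Prop, OrientedGraph D →
      ∃ v, SeymourVertex D v := by
  intro m hm D₀ hOG
  by_contra hno
  push_neg at hno
  obtain ⟨c, hc, hfreq⟩ := h
  have hp0' : (0:ℝ) < p := by linarith
  have h1p : (0:ℝ) < 1 - p := by linarith
  set θ : ℝ := 2 * Real.sqrt (p * (1 - p)) with hθ
  have hθ0 : 0 ≤ θ := by positivity
  have hθlt : θ < 1 := by
    have hs := Real.sq_sqrt (le_of_lt (mul_pos hp0' h1p))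
    have hs0 := Real.sqrt_nonneg (p * (1 - p))
    have hgap : (0:ℝ) < (2 * p - 1) * (2 * p - 1) := by nlinarith
    nlinarith
  set σ : ℝ := Real.sqrt θ with hσ
  have hσ0 : 0 ≤ σ := Real.sqrt_nonneg θ
  have hθσ : θ = σ ^ 2 := (Real.sq_sqrt hθ0).symm
  have hσ1 : σ < 1 := by
    by_contra hcon
    push_neg at hcon
    have : (1:ℝ) ≤ σ ^ 2 := by nlinarith
    rw [← hθσ] at this
    linarith
  set q₀ : ℝ := (min p (1 - p)) ^ m.choose 2 with hq₀
  have hq₀0 : 0 < q₀ := pow_pos (lt_min hp0' h1p) _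
  have hq₀1 : q₀ ≤ 1 := by
    apply pow_le_one₀
    · exact le_min hp0'.le h1p.le
    · exact le_trans (min_le_left _ _) hp1.le
  -- asymptotics
  have ht1 : Filter.Tendsto (fun n : ℕ => (1 - q₀) ^ (n / m)) Filter.atTop (nhds 0) := by
    apply Filter.Tendsto.comp
      (tendsto_pow_atTop_nhds_zero_of_lt_one (by linarith) (by linarith))
    apply Filter.tendsto_atTop_atTop.mpr
    intro b
    exact ⟨b * m, fun n hn => (Nat.le_div_iff_mul_le hm).mpr hn⟩
  have hσnorm : ‖σ‖ < 1 := by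
    rw [Real.norm_eq_abs, abs_of_nonneg hσ0]
    exact hσ1
  have ht2 : Filter.Tendsto (fun n : ℕ => 2 * (n:ℝ) ^ 2 * σ ^ n) Filter.atTop (nhds 0) := by
    have hsummable := summable_pow_mul_geometric_of_norm_lt_one 2 hσnorm (R := ℝ)
    have := hsummable.tendsto_atTop_zero
    have h2 := this.const_mul (2:ℝ)
    simp only [mul_zero] at h2
    refine h2.congr fun n => by ring
  have ht3 : ∀ᶠ n : ℕ in Filter.atTop, (n:ℝ) * σ ^ n ≤ 1 := by
    have hsummable := summable_pow_mul_geometric_of_norm_lt_one 1 hσnorm (R := ℝ)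
    have htend := hsummable.tendsto_atTop_zero
    have := htend.eventually_lt_const (one_pos)
    filter_upwards [this] with n hn
    have : (n:ℝ) ^ 1 * σ ^ n ≤ 1 := le_of_lt hn
    simpa using this
  have hsum0 : Filter.Tendsto
      (fun n : ℕ => (1 - q₀) ^ (n / m) + 2 * (n:ℝ) ^ 2 * σ ^ n) Filter.atTop (nhds 0) := by
    have := ht1.add ht2
    simpa using this
  have hev : ∀ᶠ n in Filter.atTop,
      gnpProb n p (fun G => ∀ D : Fin n → Fin n → Prop,
        Orients D G → ∃ v, SeymourVertex D v) < c := by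
    filter_upwards [hsum0.eventually_lt_const hc, ht3] with n h1 h3
    have hpb := prob_bound hm hp0 hp1 D₀ hOG hno n
    have hbase : (2 * Real.sqrt (p * (1 - p))) = σ ^ 2 := by rw [← hθ, hθσ]
    rw [hbase] at hpb
    have hcut := cut_sum_bound hσ0 hσ1.le h3
    calc gnpProb n p (fun G => ∀ D : Fin n → Fin n → Prop,
          Orients D G → ∃ v, SeymourVertex D v)
        ≤ (1 - q₀) ^ (n / m) + ∑ X ∈ Finset.univ.powerset.filter
            (fun X : Finset (Fin n) => X.Nonempty ∧ X ≠ Finset.univ),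
            (σ ^ 2) ^ (Xᶜ.card * X.card) := hpb
      _ ≤ (1 - q₀) ^ (n / m) + 2 * (n:ℝ) ^ 2 * σ ^ n := by linarith
      _ < c := h1
  obtain ⟨n, hn1, hn2⟩ := (hfreq.and_eventually hev).exists
  linarith
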